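/- Let V be a vector space over ℂ, D : V → V linear, n a positive integer, J, λ ∈ ℂ, and suppose (θ_j^+), (θ_j^−) satisfy the coupled system for all j ≥ 1 (with θ_j^± = 0 for j < 0). Define φ_l := θ_{2l+1}^− for l ≥ 0 and φ_{−1} := 0. Then (φ_l) satisfies the decoupled recurrence: for every l ≥ 1, 2l(2λ+2l+1)·φ_l = (D² + ((2λ+2l−1)(n+2l−2)/(2n))·J + (2l(2λ+n+2l−1)/(2n))·J)·φ_{l−1} − ((2λ+n+2l−3)(n+2l−2)/(4n²))·J²·φ_{l−2}. -/
import Mathlib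


/-- The coupled system: for every `j ≥ 1`,
`j·θ⁺_j = D θ⁻_{j−1} + ((n+j−2)/(2n))·J·θ⁺_{j−2}` and
`(2λ+j)·θ⁻_j = D θ⁺_{j−1} + ((2λ+n+j−2)/(2n))·J·θ⁻_{j−2}`,
with the convention `θ^±_j = 0` for `j < 0`. -/
def CoupledSystem {V : Type*} [AddCommGroup V] [Module ℂ V] (D : V →ₗ[ℂ] V)
    (n : ℕ) (J lam : ℂ) (θp θm : ℕ → V) : Prop :=
  ∀ j : ℕ, 1 ≤ j →
    (j : ℂ) • θp j
        = D (θm (j - 1))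
          + ((((n : ℂ) + (j : ℂ) - 2) / (2 * (n : ℂ))) * J) • (if 2 ≤ j then θp (j - 2) else 0)
    ∧ (2 * lam + (j : ℂ)) • θm j
        = D (θp (j - 1))
          + (((2 * lam + (n : ℂ) + (j : ℂ) - 2) / (2 * (n : ℂ))) * J)
              • (if 2 ≤ j then θm (j - 2) else 0)

/-- The sequence `φ_l := θ⁻_{2l+1}` (with `φ_{−1} := 0`) satisfies the decoupled recurrence:
for every `l ≥ 1`,
`2l(2λ+2l+1)·φ_l = (D² + ((2λ+2l−1)(n+2l−2)/(2n))·J + (2l(2λ+n+2l−1)/(2n))·J)·φ_{l−1}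
  − ((2λ+n+2l−3)(n+2l−2)/(4n²))·J²·φ_{l−2}`. -/
theorem stmt11 {V : Type*} [AddCommGroup V] [Module ℂ V] (D : V →ₗ[ℂ] V)
    (n : ℕ) (hn : 0 < n) (J lam : ℂ) (θp θm : ℕ → V)
    (h : CoupledSystem D n J lam θp θm)
    (φ : ℕ → V) (hφ : ∀ l : ℕ, φ l = θm (2 * l + 1)) :
    ∀ l : ℕ, 1 ≤ l →
      (2 * (l : ℂ) * (2 * lam + 2 * (l : ℂ) + 1)) • φ l
        = D (D (φ (l - 1)))
          + ((2 * lam + 2 * (l : ℂ) - 1) * ((n : ℂ) + 2 * (l : ℂ) - 2) / (2 * (n : ℂ)) * J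
              + 2 * (l : ℂ) * (2 * lam + (n : ℂ) + 2 * (l : ℂ) - 1) / (2 * (n : ℂ)) * J)
              • φ (l - 1)
          - ((2 * lam + (n : ℂ) + 2 * (l : ℂ) - 3) * ((n : ℂ) + 2 * (l : ℂ) - 2)
              / (4 * (n : ℂ) ^ 2) * J ^ 2) • (if 2 ≤ l then φ (l - 2) else 0) := by
  rintro l hl
  obtain ⟨m, rfl⟩ : ∃ m, l = m + 1 := ⟨l - 1, by omega⟩
  have e1 := (h (2 * m + 3) (by omega)).2
  have e2 := (h (2 * m + 2) (by omega)).1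
  have e3 := (h (2 * m + 1) (by omega)).2
  simp only [show 2 * m + 3 - 1 = 2 * m + 2 by omega, show 2 * m + 3 - 2 = 2 * m + 1 by omega,
    if_pos (show 2 ≤ 2 * m + 3 by omega)] at e1
  simp only [show 2 * m + 2 - 1 = 2 * m + 1 by omega, show 2 * m + 2 - 2 = 2 * m by omega,
    if_pos (show 2 ≤ 2 * m + 2 by omega)] at e2
  simp only [show 2 * m + 1 - 1 = 2 * m by omega] at e3
  push_cast at e1 e2 e3 ⊢
  simp only [show m + 1 - 1 = m by omega, hφ, show 2 * (m + 1) + 1 = 2 * m + 3 by omega]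
  have e3' : D (θp (2 * m))
      = (2 * lam + (2 * (m : ℂ) + 1)) • θm (2 * m + 1)
        - ((2 * lam + (n : ℂ) + (2 * (m : ℂ) + 1) - 2) / (2 * (n : ℂ)) * J)
            • (if 1 ≤ 2 * m then θm (2 * m - 1) else 0) :=
    eq_sub_of_add_eq e3.symm
  have key : (2 * ((m : ℂ) + 1) * (2 * lam + 2 * ((m : ℂ) + 1) + 1)) • θm (2 * m + 3)
      = (2 * (m : ℂ) + 2) • ((2 * lam + (2 * (m : ℂ) + 3)) • θm (2 * m + 3)) := by
    rw [smul_smul]; ring_nf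
  rw [key, e1, smul_add, ← map_smul, e2, map_add, map_smul, e3']
  rcases Nat.eq_zero_or_pos m with hm | hm
  · subst hm
    norm_num
    module
  · rw [if_pos (show 1 ≤ 2 * m by omega), if_pos (show 1 ≤ m by omega),
      show 2 * m - 1 = 2 * (m - 1) + 1 by omega]
    push_cast
    module
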